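/- Let p be a prime, K a field of characteristic p, and G a finite subgroup of the group Aut(K) of ring automorphisms of K, with fixed subfield K^G = {x ∈ K | g(x) = x for all g ∈ G}. Let n be a natural number and let L = (K^G)^{p^n} = {x^{p^n} | x ∈ K^G} be the subfield of p^n-th powers of elements of K^G. Then a ring automorphism h of K lies in the normalizer of G in Aut(K) if and only if h(L) = L. -/

import Mathlib

private lemma ringAut_mul_apply {K : Type*} [Field K] (g h : RingAut K) (x : K) :
    (g * h) x = g (h x) := rfl

private lemma ringAut_inv_apply_apply {K : Type*} [Field K] (h : RingAut K) (x : K) :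
    h⁻¹ (h x) = x := h.symm_apply_apply x

private lemma ringAut_apply_inv_apply {K : Type*} [Field K] (h : RingAut K) (x : K) :
    h (h⁻¹ x) = x := h.apply_symm_apply x

open FixedPoints in
/-- Artin: an automorphism fixing the fixed field of a finite group `G` lies in `G`. -/
lemma mem_of_fixes_fixedField {K : Type*} [Field K] (G : Subgroup (RingAut K)) [Finite G]
    (σ : RingAut K) (hσ : ∀ x ∈ {x : K | ∀ g ∈ G, g x = x}, σ x = x) : σ ∈ G := by
  have hF : ∀ x : FixedPoints.subfield G K, σ x = x := by
    rintro ⟨x, hx⟩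
    exact hσ x fun g hg => hx ⟨g, hg⟩
  let σ' : K ≃ₐ[FixedPoints.subfield G K] K :=
    AlgEquiv.ofRingEquiv (f := σ) (fun x => hF x)
  obtain ⟨⟨g, hg⟩, hgeq⟩ := FixedPoints.toAlgAut_surjective G K σ'
  have : g = σ := by
    ext x
    exact congrArg (fun f => f x) (congrArg (DFunLike.coe) hgeq)
  exact this ▸ hg

theorem mem_normalizer_iff_image_fixedField_eq {K : Type*} [Field K]
    (G : Subgroup (RingAut K)) [Finite G] (h : RingAut K) :
    h ∈ Subgroup.normalizer (G : Set (RingAut K)) ↔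
      ⇑h '' {x : K | ∀ g ∈ G, g x = x} = {x : K | ∀ g ∈ G, g x = x} := by
  set F : Set K := {x : K | ∀ g ∈ G, g x = x} with hFdef
  constructor
  · intro hn
    apply Set.eq_of_subset_of_subset
    · rintro _ ⟨x, hx, rfl⟩
      intro g hg
      have hg' : h⁻¹ * g * h ∈ G := by
        have := (Subgroup.mem_normalizer_iff.mp hn (h⁻¹ * g * h)).mpr
        apply this
        group
        exact hg
      have h1 := hx _ hg'
      have h2 := congrArg h h1
      simp only [ringAut_mul_apply] at h2
      rwa [ringAut_apply_inv_apply] at h2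
    · intro x hx
      refine ⟨h⁻¹ x, ?_, ringAut_apply_inv_apply h x⟩
      intro g hg
      have hg' : h * g * h⁻¹ ∈ G := (Subgroup.mem_normalizer_iff.mp hn g).mp hg
      have h1 := hx _ hg'
      simp only [ringAut_mul_apply] at h1
      have h2 := congrArg (fun y => h⁻¹ y) h1
      simpa only [ringAut_inv_apply_apply] using h2
  · intro hI
    intro g
    constructor
    · intro hg
      apply mem_of_fixes_fixedField G
      intro x hx
      have hx' : x ∈ ⇑h '' F := by rw [hI]; exact hx
      obtain ⟨y, hy, rfl⟩ := hx'
      simp only [ringAut_mul_apply, ringAut_inv_apply_apply]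
      rw [hy g hg]
    · intro hg
      apply mem_of_fixes_fixedField G
      intro x hx
      have hhx : h x ∈ F := by
        rw [← hI]; exact ⟨x, hx, rfl⟩
      have h1 := hhx _ hg
      simp only [ringAut_mul_apply, ringAut_inv_apply_apply] at h1
      exact h.injective h1

/-- In characteristic `p`, a ring automorphism `h` of a field `K` normalizes a
finite subgroup `G` of `Aut(K)` iff `h` maps the subfield
`L = (K^G)^{pⁿ}` of `pⁿ`-th powers of `G`-fixed elements onto itself. -/
theorem mem_normalizer_iff_image_pow_fixedField_eq {K : Type*} [Field K]
    (p : ℕ) [Fact p.Prime] [CharP K p] (G : Subgroup (RingAut K)) [Finite G]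
    (n : ℕ) (h : RingAut K) :
    h ∈ Subgroup.normalizer (G : Set (RingAut K)) ↔
      ⇑h '' ((fun x : K => x ^ p ^ n) '' {x : K | ∀ g ∈ G, g x = x}) =
        (fun x : K => x ^ p ^ n) '' {x : K | ∀ g ∈ G, g x = x} := by
  have hinj : Function.Injective (fun x : K => x ^ p ^ n) := by
    have heq : (fun x : K => x ^ p ^ n) = ⇑(iterateFrobenius K p n) := by
      ext x; simp [iterateFrobenius_def]
    rw [heq]
    exact (iterateFrobenius K p n).injective
  have hcomm : ⇑h '' ((fun x : K => x ^ p ^ n) '' {x : K | ∀ g ∈ G, g x = x}) =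
      (fun x : K => x ^ p ^ n) '' (⇑h '' {x : K | ∀ g ∈ G, g x = x}) := by
    rw [Set.image_image, Set.image_image]
    ext x
    simp [map_pow]
  rw [hcomm, mem_normalizer_iff_image_fixedField_eq G h]
  constructor
  · intro e; rw [e]
  · exact fun e => hinj.image_injective e
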